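/- For any n₂ ≥ 1 and any configuration η ∈ V*,n₂ ∖ V*,n₂^{4n₂} whose occupied sites form a single cluster, there exists a configuration η̃ ∈ V*,n₂^{4n₂} with H(η̃) < H(η). (One may take η̃ to agree with η on the support of η and to have, in addition, a particle of type 1 at every empty site adjacent to a particle of type 2 of η.) -/

import Mathlib

/- Common framework: two-type Kawasaki dynamics on a finite box in ℤ². -/

abbrev Site := ℤ × ℤ
abbrev Cell := ℤ × ℤ

/-- Nearest-neighbour adjacency on ℤ². -/
def adjacent (x y : Site) : Prop := |x.1 - y.1| + |x.2 - y.2| = 1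

instance (x y : Site) : Decidable (adjacent x y) :=
  inferInstanceAs (Decidable (|x.1 - y.1| + |x.2 - y.2| = 1))

/-- The four nearest neighbours of a site. -/
def nbrs (x : Site) : Finset Site :=
  {(x.1 + 1, x.2), (x.1 - 1, x.2), (x.1, x.2 + 1), (x.1, x.2 - 1)}

/-- Internal boundary ∂⁻Λ of a finite set Λ ⊂ ℤ². -/
def intBdry (Λ : Finset Site) : Finset Site := Λ.filter (fun x => ¬ nbrs x ⊆ Λ)

/-- Λ⁻ = Λ ∖ ∂⁻Λ. -/
def inner1 (Λ : Finset Site) : Finset Site := Λ \ intBdry Λ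

/-- Λ⁻⁻ = Λ⁻ ∖ ∂⁻Λ⁻. -/
def inner2 (Λ : Finset Site) : Finset Site := inner1 Λ \ intBdry (inner1 Λ)

/-- A configuration on Λ: each site of Λ carries 0 (empty), 1 (type 1) or 2 (type 2);
sites outside Λ are empty. -/
structure Config (Λ : Finset Site) where
  val : Site → Fin 3
  zero_outside : ∀ x, x ∉ Λ → val x = 0

/-- Number of particles of type 1. -/
def numType1 {Λ : Finset Site} (η : Config Λ) : ℕ := (Λ.filter (fun x => η.val x = 1)).card

/-- Number of particles of type 2. -/
def numType2 {Λ : Finset Site} (η : Config Λ) : ℕ := (Λ.filter (fun x => η.val x = 2)).card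

/-- Number of active bonds: unordered n.n. pairs of sites of Λ⁻, one carrying a 1 and the
other a 2 (each such unordered pair is counted once, as the ordered pair (type1,type2)). -/
def numBonds {Λ : Finset Site} (η : Config Λ) : ℕ :=
  ((inner1 Λ ×ˢ inner1 Λ).filter
    (fun p => adjacent p.1 p.2 ∧ η.val p.1 = 1 ∧ η.val p.2 = 2)).card

/-- The Hamiltonian H(η) = −U·B(η) + Δ1·n1(η) + Δ2·n2(η). -/
noncomputable def energy (U Δ1 Δ2 : ℝ) {Λ : Finset Site} (η : Config Λ) : ℝ :=
  -U * numBonds η + Δ1 * numType1 η + Δ2 * numType2 η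

/-- Allowed moves of the Kawasaki dynamics: hopping inside Λ, creation and annihilation
at the internal boundary. -/
def Communicates {Λ : Finset Site} (η η' : Config Λ) : Prop :=
  (∃ x ∈ Λ, ∃ y ∈ Λ, adjacent x y ∧ η.val x = 0 ∧ η.val y ≠ 0 ∧
      η'.val = Function.update (Function.update η.val x (η.val y)) y 0) ∨
  (∃ x ∈ intBdry Λ, ∃ v : Fin 3, v ≠ 0 ∧ η.val x = 0 ∧
      η'.val = Function.update η.val x v) ∨
  (∃ x ∈ intBdry Λ, η.val x ≠ 0 ∧ η'.val = Function.update η.val x 0)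

/-- ω is a path of allowed moves from η to η′. -/
def IsPath {Λ : Finset Site} (ω : List (Config Λ)) (η η' : Config Λ) : Prop :=
  ω.head? = some η ∧ ω.getLast? = some η' ∧ ω.Chain' Communicates

/-- Communication height between two sets of configurations:
Φ(A,B) = min over paths from A to B of the maximal energy along the path. -/
noncomputable def commHeightSet (U Δ1 Δ2 : ℝ) {Λ : Finset Site}
    (A B : Set (Config Λ)) : ℝ :=
  sInf {m : ℝ | ∃ η ∈ A, ∃ η' ∈ B, ∃ ω : List (Config Λ),
    IsPath ω η η' ∧ ∀ ξ ∈ ω, energy U Δ1 Δ2 ξ ≤ m}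

/-- Communication height Φ(η,η′). -/
noncomputable def commHeight (U Δ1 Δ2 : ℝ) {Λ : Finset Site} (η η' : Config Λ) : ℝ :=
  commHeightSet U Δ1 Δ2 {η} {η'}

/-- Stability level V_η = Φ(η, I_η) − H(η), where I_η = {ξ : H(ξ) < H(η)}. -/
noncomputable def stabLevel (U Δ1 Δ2 : ℝ) {Λ : Finset Site} (η : Config Λ) : ℝ :=
  commHeightSet U Δ1 Δ2 {η} {ξ : Config Λ | energy U Δ1 Δ2 ξ < energy U Δ1 Δ2 η}
    - energy U Δ1 Δ2 η

/-- The set of stable configurations (global minimizers of H). -/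
def Xstab (U Δ1 Δ2 : ℝ) (Λ : Finset Site) : Set (Config Λ) :=
  {η | ∀ ξ : Config Λ, energy U Δ1 Δ2 η ≤ energy U Δ1 Δ2 ξ}

/-- The set of metastable configurations (non-stable configurations of maximal
stability level). -/
def Xmeta (U Δ1 Δ2 : ℝ) (Λ : Finset Site) : Set (Config Λ) :=
  {η | η ∉ Xstab U Δ1 Δ2 Λ ∧
    ∀ ξ : Config Λ, ξ ∉ Xstab U Δ1 Δ2 Λ → stabLevel U Δ1 Δ2 ξ ≤ stabLevel U Δ1 Δ2 η}

/-- The empty configuration □. -/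
def emptyConfig (Λ : Finset Site) : Config Λ := ⟨fun _ => 0, fun _ _ => rfl⟩

/-- The critical length ℓ* = ⌈Δ1/(4U − Δ1 − Δ2)⌉. -/
noncomputable def lstar (U Δ1 Δ2 : ℝ) : ℤ := ⌈Δ1 / (4 * U - Δ1 - Δ2)⌉

/-- The box Λ: in dual coordinates u(x) = ((x1−x2)/2,(x1+x2)/2) the
(L+3/2)×(L+3/2) square centered at the origin, i.e. |x1−x2| ≤ L+1 and |x1+x2| ≤ L+1. -/
noncomputable def latBox (L : ℕ) : Finset Site :=
  (Finset.Icc (-(L : ℤ) - 1) ((L : ℤ) + 1) ×ˢ Finset.Icc (-(L : ℤ) - 1) ((L : ℤ) + 1)).filter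
    (fun x => |x.1 - x.2| ≤ (L : ℤ) + 1 ∧ |x.1 + x.2| ≤ (L : ℤ) + 1)

/-- The m×n dual rectangle of sites (in dual coordinates) with dual lower-left corner p
(in standard coordinates): sites p + i·(1,−1) + j·(1,1) for 0 ≤ i < m, 0 ≤ j < n.
All these sites have the same parity. -/
def dualRect (p : Site) (m n : ℕ) : Finset Site :=
  (Finset.range m ×ˢ Finset.range n).image
    (fun ij => ((p.1 + (ij.1 : ℤ) + (ij.2 : ℤ), p.2 + (ij.2 : ℤ) - (ij.1 : ℤ)) : Site))

/-- The sites adjacent to a set S but not in S. -/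
def siteBorder (S : Finset Site) : Finset Site := S.biUnion nbrs \ S

/-- ⊞: the tb-tiled configurations whose particles of type 2 occupy an L×L square in dual
coordinates filling Λ⁻ (type-2 sites in Λ⁻⁻, surrounding type-1 sites in Λ⁻); these are
the two largest checkerboard droplets (one of each parity). -/
def boxPlus (L : ℕ) : Set (Config (latBox L)) :=
  {η | ∃ p : Site,
      (∀ x, η.val x = 2 ↔ x ∈ dualRect p L L) ∧
      (∀ x, η.val x = 1 ↔ x ∈ siteBorder (dualRect p L L)) ∧
      dualRect p L L ⊆ inner2 (latBox L) ∧
      siteBorder (dualRect p L L) ⊆ inner1 (latBox L)}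

/-- The active-bond relation between sites. -/
def bondRel {Λ : Finset Site} (η : Config Λ) (x y : Site) : Prop :=
  x ∈ inner1 Λ ∧ y ∈ inner1 Λ ∧ adjacent x y ∧
  ((η.val x = 1 ∧ η.val y = 2) ∨ (η.val x = 2 ∧ η.val y = 1))

/-- C is a cluster of η: a maximal connected component of the occupied sites under the
active-bond relation. -/
def IsCluster {Λ : Finset Site} (η : Config Λ) (C : Finset Site) : Prop :=
  ∃ x : Site, η.val x ≠ 0 ∧ ∀ y : Site, y ∈ C ↔ Relation.ReflTransGen (bondRel η) x y

/-- The occupied sites of η form a single cluster. -/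
def SingleCluster {Λ : Finset Site} (η : Config Λ) : Prop :=
  ∃ x : Site, η.val x ≠ 0 ∧
    ∀ y : Site, η.val y ≠ 0 → Relation.ReflTransGen (bondRel η) x y

/-- Dual coordinates, renormalized to land in ℤ² (within a fixed parity class this maps
dual neighbours to adjacent cells). -/
def cellOf (x : Site) : Cell := ((x.1 - x.2).fdiv 2, (x.1 + x.2).fdiv 2)

/-- The sites of Λ occupied by particles of type 2. -/
def type2Sites {Λ : Finset Site} (η : Config Λ) : Finset Site :=
  Λ.filter (fun x => η.val x = 2)

/-- Tile support of a configuration: the polyomino in dual coordinates given by the unit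
squares centered at the particles of type 2. -/
def tileSupport {Λ : Finset Site} (η : Config Λ) : Finset Cell :=
  (type2Sites η).image cellOf

/- ----------  Polyominoes ---------- -/

/-- Perimeter of a polyomino (number of boundary edges, inner boundaries included). -/
def perim (A : Finset Cell) : ℕ :=
  A.sum (fun c => ((nbrs c).filter (fun d => d ∉ A)).card)

def adjIn (A : Finset Cell) (x y : Cell) : Prop := x ∈ A ∧ y ∈ A ∧ adjacent x y

/-- Connectedness of a polyomino. -/
def PolyConnected (A : Finset Cell) : Prop :=
  A.Nonempty ∧ ∀ x ∈ A, ∀ y ∈ A, Relation.ReflTransGen (adjIn A) x y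

/-- Number of holes: bounded (= finite) connected components of the complement. -/
noncomputable def numHoles (A : Finset Cell) : ℕ :=
  Set.ncard {C : Set Cell | ∃ d : Cell, d ∉ A ∧
    C = {e : Cell | Relation.ReflTransGen (fun u v => adjacent u v ∧ u ∉ A ∧ v ∉ A) d e} ∧
    C.Finite}

/-- The four cells having lattice point v as a corner. -/
def cellsAt (v : Cell) : Finset Cell :=
  {(v.1 - 1, v.2 - 1), (v.1 - 1, v.2), (v.1, v.2 - 1), v}

/-- The lattice points that are corners of cells of A. -/
def vertexSet (A : Finset Cell) : Finset Cell :=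
  A.biUnion (fun c => {c, (c.1 + 1, c.2), (c.1, c.2 + 1), (c.1 + 1, c.2 + 1)})

def occAt (A : Finset Cell) (v : Cell) : ℕ := ((cellsAt v).filter (fun c => c ∈ A)).card

/-- Number of convex corners ψ(A): vertices with exactly one incident occupied cell. -/
def convexCorners (A : Finset Cell) : ℕ :=
  (vertexSet A).sum (fun v => if occAt A v = 1 then 1 else 0)

/-- Number of concave corners φ(A): a vertex with three incident occupied cells counts
once, a vertex with two diagonally opposite occupied cells counts twice. -/
def concaveCorners (A : Finset Cell) : ℕ :=
  (vertexSet A).sum (fun v =>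
    if occAt A v = 3 then 1
    else if occAt A v = 2 ∧ (((v.1 - 1, v.2 - 1) ∈ A ∧ v ∈ A) ∨
          ((v.1 - 1, v.2) ∈ A ∧ (v.1, v.2 - 1) ∈ A)) then 2
    else 0)

/-- T(A) = 2P(A) + ψ(A) − φ(A). -/
def Tpoly (A : Finset Cell) : ℤ :=
  2 * (perim A : ℤ) + (convexCorners A : ℤ) - (concaveCorners A : ℤ)

/-- For connected polyominoes, T(A) = 2P(A) + 4 − 4Q(A). -/
noncomputable def Tconn (A : Finset Cell) : ℤ :=
  2 * (perim A : ℤ) + 4 - 4 * (numHoles A : ℤ)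

/-- Width (number of columns) of the circumscribing rectangle. -/
def polyWidth (A : Finset Cell) : ℤ :=
  (WithBot.unbotD 0 (A.image Prod.fst).max) - (WithTop.untopD 0 (A.image Prod.fst).min) + 1

/-- Height (number of rows) of the circumscribing rectangle. -/
def polyHeight (A : Finset Cell) : ℤ :=
  (WithBot.unbotD 0 (A.image Prod.snd).max) - (WithTop.untopD 0 (A.image Prod.snd).min) + 1

/-- A polyomino is monotone if its perimeter equals the perimeter of its circumscribing
rectangle. -/
def MonotonePoly (A : Finset Cell) : Prop :=
  (perim A : ℤ) = 2 * (polyWidth A + polyHeight A)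

/-- The reference standard polyomino: an (l+ζ)×l rectangle (quasi-square, ζ ∈ {0,1})
with a bar of length k attached to a longest side, starting at offset a. -/
def baseStd (l ζ a k : ℕ) : Finset Cell :=
  ((Finset.range (l + ζ)) ×ˢ (Finset.range l)).image
      (fun q => (((q.1 : ℤ), (q.2 : ℤ)) : Cell))
    ∪ (Finset.range k).image (fun i => ((((a + i : ℕ) : ℤ), (l : ℤ)) : Cell))

/-- The eight symmetries of the square lattice. -/
def dihedralMaps : List (Cell → Cell) :=
  [fun c => (c.1, c.2), fun c => (-c.1, c.2), fun c => (c.1, -c.2), fun c => (-c.1, -c.2),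
   fun c => (c.2, c.1), fun c => (-c.2, c.1), fun c => (c.2, -c.1), fun c => (-c.2, -c.1)]

/-- A standard polyomino: a quasi-square with possibly a bar attached to one of its
longest sides (up to lattice symmetries and translations). -/
def IsStandardPoly (A : Finset Cell) : Prop :=
  ∃ l ζ a k : ℕ, 1 ≤ l ∧ ζ ≤ 1 ∧ a + k ≤ l + ζ ∧
    ∃ f ∈ dihedralMaps, ∃ t : Cell,
      A = (baseStd l ζ a k).image (fun c => (((f c).1 + t.1, (f c).2 + t.2) : Cell))

/- ----------  tb-tiled configurations ---------- -/

/-- V_{*,k}: configurations with exactly k particles of type 2, all lying in Λ⁻⁻. -/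
def VStar (Λ : Finset Site) (k : ℕ) : Set (Config Λ) :=
  {η | numType2 η = k ∧ ∀ x, η.val x = 2 → x ∈ inner2 Λ}

/-- V_{*,k}^{4k}: configurations of V_{*,k} with exactly 4k active bonds and no isolated
particle of type 1 (the tb-tiled configurations with k particles of type 2). -/
def VTiled (Λ : Finset Site) (k : ℕ) : Set (Config Λ) :=
  {η | η ∈ VStar Λ k ∧ numBonds η = 4 * k ∧
    ∀ x, η.val x = 1 → ∃ y ∈ nbrs x, η.val y = 2}

/-- All particles of type 2 have the same (site) parity. -/
def SameParity2 {Λ : Finset Site} (η : Config Λ) : Prop :=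
  ∀ x y : Site, η.val x = 2 → η.val y = 2 → (x.1 + x.2) % 2 = (y.1 + y.2) % 2

/-- A standard configuration: tile support a standard polyomino (all type-2 particles of
one parity). -/
def IsStandardConfig {Λ : Finset Site} (η : Config Λ) : Prop :=
  SameParity2 η ∧ IsStandardPoly (tileSupport η)

/-- A tb-tiled configuration: at least one particle of type 2, every particle of type 2
saturated, no isolated particle of type 1. -/
def IsTbTiled {Λ : Finset Site} (η : Config Λ) : Prop :=
  (∃ x, η.val x = 2) ∧
  (∀ x, η.val x = 2 → ∀ y ∈ nbrs x, η.val y = 1) ∧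
  (∀ x, η.val x = 1 → ∃ y ∈ nbrs x, η.val y = 2)

/-- η is the tb-tiled droplet with type-2 sites S: type-2 exactly on S, type-1 exactly
on the border of S, empty elsewhere. -/
def IsTbDroplet {Λ : Finset Site} (η : Config Λ) (S : Finset Site) : Prop :=
  (∀ x, η.val x = 2 ↔ x ∈ S) ∧ (∀ x, η.val x = 1 ↔ x ∈ siteBorder S)

/- ----------  cluster-wise quantities ---------- -/

def numType1In {Λ : Finset Site} (η : Config Λ) (C : Finset Site) : ℕ :=
  (C.filter (fun x => η.val x = 1)).card

def numType2In {Λ : Finset Site} (η : Config Λ) (C : Finset Site) : ℕ :=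
  (C.filter (fun x => η.val x = 2)).card

def numBondsIn {Λ : Finset Site} (η : Config Λ) (C : Finset Site) : ℕ :=
  ((C ×ˢ C).filter (fun q => q.1 ∈ inner1 Λ ∧ q.2 ∈ inner1 Λ ∧ adjacent q.1 q.2 ∧
    η.val q.1 = 1 ∧ η.val q.2 = 2)).card

def tileSupportIn {Λ : Finset Site} (η : Config Λ) (C : Finset Site) : Finset Cell :=
  (C.filter (fun x => η.val x = 2)).image cellOf

/-- Number of active bonds incident to the site x. -/
def bondDeg {Λ : Finset Site} (η : Config Λ) (x : Site) : ℕ :=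
  ((nbrs x).filter (fun y => x ∈ inner1 Λ ∧ y ∈ inner1 Λ ∧
    ((η.val x = 1 ∧ η.val y = 2) ∨ (η.val x = 2 ∧ η.val y = 1)))).card

/-- Number of missing bonds of the type-1 particles of C. -/
def missingBonds {Λ : Finset Site} (η : Config Λ) (C : Finset Site) : ℤ :=
  ∑ x ∈ C.filter (fun x => η.val x = 1), (4 - (bondDeg η x : ℤ))

/- ----------  geometry for the energy-reduction mechanisms ---------- -/

/-- A site is lattice-connecting: there is a n.n. path of empty sites from it to ∂⁻Λ. -/
def LatticeConnecting {Λ : Finset Site} (η : Config Λ) (x : Site) : Prop :=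
  ∃ l : List Site, List.Chain adjacent x l ∧
    (x :: l).getLast (List.cons_ne_nil x l) ∈ intBdry Λ ∧
    ∀ y ∈ l, y ∈ Λ ∧ η.val y = 0

/-- A pending dimer (x,y): a lattice-connecting type-1 particle x whose unique active
bond is with the adjacent type-2 particle y, which has at most three active bonds. -/
def PendingDimer {Λ : Finset Site} (η : Config Λ) (x y : Site) : Prop :=
  bondRel η x y ∧ η.val x = 1 ∧ η.val y = 2 ∧ LatticeConnecting η x ∧
  bondDeg η x = 1 ∧ bondDeg η y ≤ 3

/-- The sites of a horizontal (in dual coordinates) beam of length l: l+1 particles of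
type 1 at mutual dual distance 1, with left-most site p. -/
def beamSites (p : Site) (l : ℕ) : Finset Site :=
  (Finset.range (l + 1)).image (fun i : ℕ => ((p.1 + (i : ℤ), p.2 - (i : ℤ)) : Site))

/-- The center row of the (south) support of the beam. -/
def centerSites (p : Site) (l : ℕ) : Finset Site :=
  (Finset.range l).image (fun i : ℕ => ((p.1 + (i : ℤ), p.2 - 1 - (i : ℤ)) : Site))

/-- The basement row of the (south) support of the beam. -/
def basementSites (p : Site) (l : ℕ) : Finset Site :=
  (Finset.range (l + 1)).image (fun i : ℕ => ((p.1 - 1 + (i : ℤ), p.2 - 1 - (i : ℤ)) : Site))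

/-- The (south) support of a beam/bridge. -/
def bridgeSupport (p : Site) (l : ℕ) : Finset Site :=
  beamSites p l ∪ centerSites p l ∪ basementSites p l

/-- The 12 sites of a slot: a 4×4 block minus its four corner sites; p is the lower-left
corner of the block. -/
def slotSites (p : Site) : Finset Site :=
  ((Finset.range 4 ×ˢ Finset.range 4).image
      (fun ij => ((p.1 + (ij.1 : ℤ), p.2 + (ij.2 : ℤ)) : Site))) \
    {(p.1, p.2), (p.1 + 3, p.2), (p.1, p.2 + 3), (p.1 + 3, p.2 + 3)}

/-- The slot-conjugate (diagonally opposite) ordered pairs of central sites of a slot. -/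
def slotDiagPairs (p : Site) : List (Site × Site) :=
  [((p.1 + 1, p.2 + 1), (p.1 + 2, p.2 + 2)), ((p.1 + 2, p.2 + 2), (p.1 + 1, p.2 + 1)),
   ((p.1 + 1, p.2 + 2), (p.1 + 2, p.2 + 1)), ((p.1 + 2, p.2 + 1), (p.1 + 1, p.2 + 2))]

/-- The type-2 sites of the bar added on side d (0 = north, 1 = south, 2 = east,
3 = west, in dual coordinates) of the m×n dual rectangle with corner p. -/
def sideBar (p : Site) (m n : ℕ) (d : Fin 4) : Finset Site :=
  if d = 0 then dualRect (p.1 + (n : ℤ), p.2 + (n : ℤ)) m 1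
  else if d = 1 then dualRect (p.1 - 1, p.2 - 1) m 1
  else if d = 2 then dualRect (p.1 + (m : ℤ), p.2 - (m : ℤ)) 1 n
  else dualRect (p.1 - 1, p.2 + 1) 1 n

/-- The length of side d of an m×n dual rectangle. -/
def sideLen (m n : ℕ) (d : Fin 4) : ℕ := if (d : ℕ) ≤ 1 then m else n

/-- The type-2 sites left after removing the outermost bar on side d of the m×n dual
rectangle with corner p. -/
def shrunkRect (p : Site) (m n : ℕ) (d : Fin 4) : Finset Site :=
  if d = 0 then dualRect p m (n - 1)
  else if d = 1 then dualRect (p.1 + 1, p.2 + 1) m (n - 1)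
  else if d = 2 then dualRect p (m - 1) n
  else dualRect (p.1 + 1, p.2 - 1) (m - 1) n


/- ----------  auxiliary lemmas ---------- -/

lemma adjacent_symm {x y : Site} (h : adjacent x y) : adjacent y x := by
  unfold adjacent at h ⊢
  simp only [Int.abs_eq_natAbs] at h ⊢
  omega

lemma mem_nbrs {x y : Site} : y ∈ nbrs x ↔ adjacent x y := by
  obtain ⟨a, b⟩ := x; obtain ⟨c, d⟩ := y
  simp only [nbrs, adjacent, Finset.mem_insert, Finset.mem_singleton, Prod.mk.injEq,
    Int.abs_eq_natAbs]
  omega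

lemma nbrs_card (x : Site) : (nbrs x).card = 4 := by
  obtain ⟨a, b⟩ := x
  rw [nbrs]
  rw [Finset.card_insert_of_notMem (by
        simp only [Finset.mem_insert, Finset.mem_singleton, Prod.mk.injEq]; omega),
      Finset.card_insert_of_notMem (by
        simp only [Finset.mem_insert, Finset.mem_singleton, Prod.mk.injEq]; omega),
      Finset.card_insert_of_notMem (by
        simp only [Finset.mem_singleton, Prod.mk.injEq]; omega),
      Finset.card_singleton]

lemma adjacent_parity {x y : Site} (h : adjacent x y) :
    (x.1 + x.2) % 2 ≠ (y.1 + y.2) % 2 := by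
  unfold adjacent at h
  simp only [Int.abs_eq_natAbs] at h
  omega

/-- for a single-cluster configuration η ∈ V_{*,n₂} ∖ V_{*,n₂}^{4n₂},
there is a tb-tiled configuration η̃ ∈ V_{*,n₂}^{4n₂} with strictly lower energy. -/
theorem single_cluster_tb_tiling_lowers_energy
    (U Δ1 Δ2 : ℝ) (hU : 0 < U) (hΔ1 : 0 < Δ1) (hΔ1U : Δ1 < U)
    (hgap : 2 * U < Δ2 - Δ1) (hsum : Δ1 + Δ2 < 4 * U)
    (Λ : Finset Site) (k : ℕ) (hk : 1 ≤ k)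
    (η : Config Λ) (hη : η ∈ VStar Λ k) (hnot : η ∉ VTiled Λ k)
    (hsc : SingleCluster η) :
    ∃ ηt ∈ VTiled Λ k, energy U Δ1 Δ2 ηt < energy U Δ1 Δ2 η := by
  classical
  obtain ⟨hn2, h2in⟩ := hη
  set S : Finset Site := Λ.filter (fun x => η.val x = 2) with hSdef
  have hSk : S.card = k := hn2
  have hmemS : ∀ x, x ∈ S ↔ η.val x = 2 := by
    intro x
    rw [hSdef]
    simp only [Finset.mem_filter]
    constructor
    · exact fun h => h.2
    · intro h
      refine ⟨?_, h⟩
      by_contra hx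
      have h0 := η.zero_outside x hx
      rw [h0] at h
      exact absurd h (by decide)
  have hin1sub : inner1 Λ ⊆ Λ := Finset.sdiff_subset
  have hin2' : ∀ x ∈ inner2 Λ, x ∈ inner1 Λ ∧ ∀ y ∈ nbrs x, y ∈ inner1 Λ := by
    intro x hx
    simp only [inner2, intBdry, Finset.mem_sdiff, Finset.mem_filter, not_and, not_not] at hx
    exact ⟨hx.1, fun y hy => hx.2 hx.1 hy⟩
  have hS2 : ∀ x ∈ S, x ∈ inner2 Λ := fun x hx => h2in x ((hmemS x).mp hx)
  obtain ⟨x₀, hx₀ne, hx₀⟩ := hsc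
  have hbsymm : Symmetric (bondRel η) := by
    rintro a b ⟨h1, h2, h3, h4⟩
    exact ⟨h2, h1, adjacent_symm h3, by tauto⟩
  have hSne : S.Nonempty := Finset.card_pos.mp (by rw [hSk]; exact hk)
  obtain ⟨w, hw⟩ := hSne
  have hw2 : η.val w = 2 := (hmemS w).mp hw
  -- every type-1 particle has a type-2 neighbour
  have hone2 : ∀ y, η.val y = 1 → ∃ z ∈ nbrs y, η.val z = 2 := by
    intro y hy1
    have hpath := hx₀ y (by rw [hy1]; decide)
    rcases hpath.cases_tail with heq | ⟨c, _, hcb⟩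
    · subst heq
      have hpw := hx₀ w (by rw [hw2]; decide)
      rcases hpw.cases_head with heq2 | ⟨c, hc, _⟩
      · rw [heq2, hw2] at hy1
        exact absurd hy1 (by decide)
      · obtain ⟨_, _, hadj, hval⟩ := hc
        rcases hval with ⟨_, h2⟩ | ⟨h2, _⟩
        · exact ⟨c, mem_nbrs.mpr hadj, h2⟩
        · rw [hy1] at h2
          exact absurd h2 (by decide)
    · obtain ⟨_, _, hadj, hval⟩ := hcb
      rcases hval with ⟨_, h2⟩ | ⟨h2, _⟩
      · rw [hy1] at h2
        exact absurd h2 (by decide)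
      · exact ⟨c, mem_nbrs.mpr (adjacent_symm hadj), h2⟩
  -- parity invariant along bond paths
  have hpar : ∀ a b, η.val a = 2 → Relation.ReflTransGen (bondRel η) a b →
      (η.val b = 2 ∧ (a.1 + a.2) % 2 = (b.1 + b.2) % 2) ∨
      (η.val b = 1 ∧ (a.1 + a.2) % 2 ≠ (b.1 + b.2) % 2) := by
    intro a b ha2 hpath
    induction hpath with
    | refl => exact Or.inl ⟨ha2, rfl⟩
    | tail hcb hstep ih =>
      obtain ⟨_, _, hadj, hval⟩ := hstep
      have hflip := adjacent_parity hadj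
      rcases ih with ⟨h2, hp⟩ | ⟨h1, hp⟩
      · rcases hval with ⟨hc1, _⟩ | ⟨_, hb1⟩
        · rw [h2] at hc1
          exact absurd hc1 (by decide)
        · exact Or.inr ⟨hb1, by omega⟩
      · rcases hval with ⟨_, hb2⟩ | ⟨hc2, _⟩
        · exact Or.inl ⟨hb2, by omega⟩
        · rw [h1] at hc2
          exact absurd hc2 (by decide)
  -- no two particles of type 2 are adjacent
  have hno22 : ∀ a ∈ S, ∀ b ∈ S, ¬ adjacent a b := by
    intro a ha b hb hab
    have ha2 := (hmemS a).mp ha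
    have hb2 := (hmemS b).mp hb
    have hpa := hx₀ a (by rw [ha2]; decide)
    have hpb := hx₀ b (by rw [hb2]; decide)
    have hpath : Relation.ReflTransGen (bondRel η) a b :=
      ((show Relation.ReflTransGen (bondRel η) a x₀ from
        haveI : Std.Symm (bondRel η) := ⟨fun _ _ h => hbsymm h⟩; Std.Symm.symm _ _ hpa)).trans hpb
    rcases hpar a b ha2 hpath with ⟨_, hp⟩ | ⟨h1, _⟩
    · exact adjacent_parity hab hp
    · rw [hb2] at h1
      exact absurd h1 (by decide)
  -- the master pair set: all (neighbour, type-2 site) pairs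
  set P : Finset (Site × Site) := S.biUnion (fun y => (nbrs y).image (fun x => (x, y)))
    with hPdef
  have hmemP : ∀ p : Site × Site, p ∈ P ↔ p.2 ∈ S ∧ p.1 ∈ nbrs p.2 := by
    intro p
    rw [hPdef]
    simp only [Finset.mem_biUnion, Finset.mem_image]
    constructor
    · rintro ⟨y, hy, x, hx, rfl⟩
      exact ⟨hy, hx⟩
    · rintro ⟨h1, h2⟩
      exact ⟨p.2, h1, p.1, h2, rfl⟩
  have hPcard : P.card = 4 * k := by
    have hdisj : ∀ a ∈ S, ∀ b ∈ S, a ≠ b →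
        Disjoint ((nbrs a).image (fun x => (x, a))) ((nbrs b).image (fun x => (x, b))) := by
      intro a _ b _ hab
      rw [Finset.disjoint_left]
      rintro p hp hq
      simp only [Finset.mem_image] at hp hq
      obtain ⟨x, _, rfl⟩ := hp
      obtain ⟨x', _, heq⟩ := hq
      exact hab ((Prod.mk.injEq _ _ _ _).mp heq).2.symm
    have h4 : ∀ y ∈ S, ((nbrs y).image (fun x => (x, y))).card = 4 := by
      intro y _
      rw [Finset.card_image_of_injective _ (fun a b h => congrArg Prod.fst h)]
      exact nbrs_card y
    rw [hPdef, Finset.card_biUnion hdisj, Finset.sum_congr rfl h4, Finset.sum_const,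
      smul_eq_mul, hSk]
    omega
  set Bs : Finset (Site × Site) := (inner1 Λ ×ˢ inner1 Λ).filter
    (fun p => adjacent p.1 p.2 ∧ η.val p.1 = 1 ∧ η.val p.2 = 2) with hBsdef
  have hBsc : numBonds η = Bs.card := by rw [hBsdef]; rfl
  set P0 : Finset (Site × Site) := P.filter (fun p => η.val p.1 = 0) with hP0def
  have hBsubP : Bs ⊆ P := by
    intro p hp
    rw [hBsdef] at hp
    simp only [Finset.mem_filter, Finset.mem_product] at hp
    obtain ⟨_, hadj, _, h2⟩ := hp
    exact (hmemP p).mpr ⟨(hmemS _).mpr h2, mem_nbrs.mpr (adjacent_symm hadj)⟩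
  have hdisjB : Disjoint Bs P0 := by
    rw [Finset.disjoint_left]
    intro p hp hp0
    rw [hBsdef] at hp
    rw [hP0def] at hp0
    simp only [Finset.mem_filter] at hp hp0
    rw [hp.2.2.1] at hp0
    exact absurd hp0.2 (by decide)
  have hcount : Bs.card + P0.card ≤ 4 * k := by
    rw [← hPcard, ← Finset.card_union_of_disjoint hdisjB]
    exact Finset.card_le_card (Finset.union_subset hBsubP (by rw [hP0def]; exact Finset.filter_subset _ _))
  have hE0sub : (siteBorder S).filter (fun x => η.val x = 0) ⊆ P0.image Prod.fst := by
    intro x hx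
    simp only [Finset.mem_filter, siteBorder, Finset.mem_sdiff, Finset.mem_biUnion] at hx
    obtain ⟨⟨⟨y, hy, hxy⟩, _⟩, h0⟩ := hx
    refine Finset.mem_image.mpr ⟨(x, y), ?_, rfl⟩
    rw [hP0def]
    simp only [Finset.mem_filter]
    exact ⟨(hmemP (x, y)).mpr ⟨hy, hxy⟩, h0⟩
  have hE0le : ((siteBorder S).filter (fun x => η.val x = 0)).card ≤ P0.card :=
    le_trans (Finset.card_le_card hE0sub) Finset.card_image_le
  -- strictness
  have hBne : numBonds η ≠ 4 * k := by
    intro h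
    exact hnot ⟨⟨hn2, h2in⟩, h, fun x hx => hone2 x hx⟩
  have hBlt : Bs.card + 1 ≤ 4 * k := by
    have h1 : Bs.card ≤ 4 * k := le_trans (Nat.le_add_right _ _) hcount
    rw [hBsc] at hBne
    omega
  -- type-1 particles all lie on the border of S
  have hn1eq : Λ.filter (fun x => η.val x = 1) = (siteBorder S).filter (fun x => η.val x = 1) := by
    ext x
    simp only [Finset.mem_filter, siteBorder, Finset.mem_sdiff, Finset.mem_biUnion]
    constructor
    · rintro ⟨hxΛ, h1⟩
      obtain ⟨z, hz, hz2⟩ := hone2 x h1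
      refine ⟨⟨⟨z, (hmemS z).mpr hz2, mem_nbrs.mpr (adjacent_symm (mem_nbrs.mp hz))⟩, ?_⟩, h1⟩
      intro hxS
      rw [(hmemS x).mp hxS] at h1
      exact absurd h1 (by decide)
    · rintro ⟨⟨⟨y, hy, hxy⟩, _⟩, h1⟩
      exact ⟨hin1sub ((hin2' y (hS2 y hy)).2 x hxy), h1⟩
  have hborder1 : siteBorder S ⊆ inner1 Λ := by
    intro x hx
    simp only [siteBorder, Finset.mem_sdiff, Finset.mem_biUnion] at hx
    obtain ⟨⟨y, hy, hxy⟩, _⟩ := hx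
    exact (hin2' y (hS2 y hy)).2 x hxy
  have hbcard : (siteBorder S).card =
      ((siteBorder S).filter (fun x => η.val x = 0)).card +
      (Λ.filter (fun x => η.val x = 1)).card := by
    rw [hn1eq, ← Finset.card_filter_add_card_filter_not
      (s := siteBorder S) (fun x => η.val x = 0)]
    congr 1
    refine congrArg Finset.card (Finset.filter_congr ?_)
    intro x hx
    have h2 : η.val x ≠ 2 := by
      intro h
      have hxS := (hmemS x).mpr h
      simp only [siteBorder, Finset.mem_sdiff] at hx
      exact hx.2 hxS
    omega
  -- the tb-tiled configuration
  have hSΛ : S ⊆ Λ := by rw [hSdef]; exact Finset.filter_subset _ _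
  have hSb : ∀ x, x ∈ S → x ∉ siteBorder S := by
    intro x hx hb
    simp only [siteBorder, Finset.mem_sdiff] at hb
    exact hb.2 hx
  set v : Site → Fin 3 :=
    fun x => if x ∈ S then 2 else if x ∈ siteBorder S then 1 else 0 with hvdef
  have hv2 : ∀ x, v x = 2 ↔ x ∈ S := by
    intro x
    rw [hvdef]
    by_cases h : x ∈ S
    · simp [h]
    · by_cases h' : x ∈ siteBorder S <;> simp [h, h']
  have hv1 : ∀ x, v x = 1 ↔ x ∈ siteBorder S := by
    intro x
    rw [hvdef]
    by_cases h : x ∈ S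
    · simp [h, hSb x h]
    · by_cases h' : x ∈ siteBorder S <;> simp [h, h']
  have hvout : ∀ x, x ∉ Λ → v x = 0 := by
    intro x hx
    have h1 : x ∉ S := fun h => hx (hSΛ h)
    have h2 : x ∉ siteBorder S := fun h => hx (hin1sub (hborder1 h))
    rw [hvdef]
    simp [h1, h2]
  set ηt : Config Λ := ⟨v, hvout⟩ with hηtdef
  have hηtv : ηt.val = v := rfl
  have hnbr1 : ∀ y ∈ S, ∀ x ∈ nbrs y, x ∈ siteBorder S := by
    intro y hy x hx
    simp only [siteBorder, Finset.mem_sdiff, Finset.mem_biUnion]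
    refine ⟨⟨y, hy, hx⟩, fun hxS => hno22 y hy x hxS (mem_nbrs.mp hx)⟩
  have hfilter2 : Λ.filter (fun x => ηt.val x = 2) = S := by
    ext x
    rw [hηtv]
    simp only [Finset.mem_filter]
    exact ⟨fun h => (hv2 x).mp h.2, fun h => ⟨hSΛ h, (hv2 x).mpr h⟩⟩
  have ht2 : numType2 ηt = k := by
    unfold numType2
    rw [hfilter2, hSk]
  have ht1 : numType1 ηt = (siteBorder S).card := by
    unfold numType1
    congr 1
    ext x
    rw [hηtv]
    simp only [Finset.mem_filter]
    exact ⟨fun h => (hv1 x).mp h.2, fun h => ⟨hin1sub (hborder1 h), (hv1 x).mpr h⟩⟩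
  have hbset : (inner1 Λ ×ˢ inner1 Λ).filter
      (fun p => adjacent p.1 p.2 ∧ ηt.val p.1 = 1 ∧ ηt.val p.2 = 2) = P := by
    ext p
    rw [hηtv]
    simp only [Finset.mem_filter, Finset.mem_product]
    constructor
    · rintro ⟨_, hadj, _, h2⟩
      exact (hmemP p).mpr ⟨(hv2 _).mp h2, mem_nbrs.mpr (adjacent_symm hadj)⟩
    · intro hp
      obtain ⟨h2, h1⟩ := (hmemP p).mp hp
      have hyin := hin2' p.2 (hS2 _ h2)
      exact ⟨⟨hyin.2 p.1 h1, hyin.1⟩, adjacent_symm (mem_nbrs.mp h1),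
        (hv1 _).mpr (hnbr1 p.2 h2 p.1 h1), (hv2 _).mpr h2⟩
  have hbonds : numBonds ηt = 4 * k := by
    unfold numBonds
    rw [hbset, hPcard]
  have hiso : ∀ x, ηt.val x = 1 → ∃ y ∈ nbrs x, ηt.val y = 2 := by
    intro x hx
    rw [hηtv] at hx ⊢
    have hxb := (hv1 x).mp hx
    simp only [siteBorder, Finset.mem_sdiff, Finset.mem_biUnion] at hxb
    obtain ⟨⟨y, hy, hxy⟩, _⟩ := hxb
    exact ⟨y, mem_nbrs.mpr (adjacent_symm (mem_nbrs.mp hxy)), (hv2 y).mpr hy⟩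
  refine ⟨ηt, ⟨⟨ht2, fun x h => hS2 x ((hv2 x).mp (hηtv ▸ h))⟩, hbonds, hiso⟩, ?_⟩
  -- energy comparison
  unfold energy
  rw [hbonds, ht1, ht2, hbcard, hn2, hBsc]
  have c1 : (Bs.card : ℝ) + ((siteBorder S).filter (fun x => η.val x = 0)).card ≤ 4 * k := by
    have := le_trans (Nat.add_le_add_left hE0le Bs.card) hcount
    exact_mod_cast this
  have c2 : (Bs.card : ℝ) + 1 ≤ 4 * k := by exact_mod_cast hBlt
  have h1 : Δ1 * (((siteBorder S).filter (fun x => η.val x = 0)).card : ℝ) ≤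
      Δ1 * (4 * k - Bs.card) :=
    mul_le_mul_of_nonneg_left (by linarith) hΔ1.le
  have h2 : Δ1 * ((4 : ℝ) * k - Bs.card) < U * (4 * k - Bs.card) :=
    mul_lt_mul_of_pos_right hΔ1U (by linarith)
  have hnt1 : numType1 η = (Λ.filter (fun x => η.val x = 1)).card := rfl
  rw [hnt1]
  push_cast
  linarith
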